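/- Let G be a finite simple graph and let G' be obtained from G by deleting a set of k edges of G. Then γ_gr^L(G) − k ≤ γ_gr^L(G') ≤ γ_gr^L(G) + 2k. -/

import Mathlib

/-- A list of distinct vertices `s = (v_1, …, v_k)` is an *L-sequence* of `G` if for each `i`,
`N[v_i] \ ⋃_{j<i} N(v_j) ≠ ∅`, i.e. there is a vertex `w` in the closed neighborhood of `v_i`
that lies in no open neighborhood `N(v_j)` for `j < i`. -/
def IsLSeq {V : Type*} (G : SimpleGraph V) (s : List V) : Prop :=
  s.Nodup ∧ ∀ i : Fin s.length, ∃ w : V,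
    (w = s.get i ∨ G.Adj (s.get i) w) ∧
    ∀ j : Fin s.length, j < i → ¬ G.Adj (s.get j) w

/-- The L-Grundy domination number of `G`: the maximum length of an L-sequence of `G`. -/
noncomputable def LGrundy {V : Type*} [Fintype V] (G : SimpleGraph V) : ℕ :=
  sSup {k : ℕ | ∃ s : List V, IsLSeq G s ∧ s.length = k}

section Aux

variable {V : Type*}

lemma isLSeq_nil (G : SimpleGraph V) : IsLSeq G [] :=
  ⟨List.nodup_nil, fun i => absurd i.isLt (by simp)⟩

lemma lgrundy_bddAbove [Fintype V] (G : SimpleGraph V) :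
    BddAbove {k : ℕ | ∃ s : List V, IsLSeq G s ∧ s.length = k} := by
  refine ⟨Fintype.card V, ?_⟩
  rintro k ⟨s, hs, rfl⟩
  exact hs.1.length_le_card

lemma le_lgrundy [Fintype V] {G : SimpleGraph V} {s : List V} (h : IsLSeq G s) :
    s.length ≤ LGrundy G :=
  le_csSup (lgrundy_bddAbove G) ⟨s, h, rfl⟩

lemma exists_lgrundy_seq [Fintype V] (G : SimpleGraph V) :
    ∃ s : List V, IsLSeq G s ∧ s.length = LGrundy G := by
  have h := Nat.sSup_mem (s := {k : ℕ | ∃ s : List V, IsLSeq G s ∧ s.length = k})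
    ⟨0, [], isLSeq_nil G, rfl⟩ (lgrundy_bddAbove G)
  exact h

/-- Generic length bound when filtering out elements from a finite set. -/
lemma length_le_filter_add {l : List V} (hl : l.Nodup) (p : V → Bool) (A : Finset V)
    (hA : ∀ x ∈ l, ¬ p x = true → x ∈ A) :
    l.length ≤ (l.filter p).length + A.card := by
  classical
  have h1 := List.length_eq_length_filter_add (l := l) p
  have h2 : (l.filter (fun x => ! p x)).length ≤ A.card := by
    have hnd : (l.filter (fun x => ! p x)).Nodup := hl.filter _
    have hsub : (l.filter (fun x => ! p x)).toFinset ⊆ A := by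
      intro x hx
      rw [List.mem_toFinset] at hx
      refine hA x (List.mem_of_mem_filter hx) ?_
      have := List.of_mem_filter hx
      simpa using this
    calc (l.filter (fun x => ! p x)).length
        = (l.filter (fun x => ! p x)).toFinset.card :=
          (List.toFinset_card_of_nodup hnd).symm
      _ ≤ A.card := Finset.card_le_card hsub
  omega

/-- Deleting one edge can increase the L-Grundy number by at most 2:
from an L-sequence of `G - e` we can obtain one of `G` losing at most 2 vertices. -/
lemma lseq_of_deleteEdge (G : SimpleGraph V) (e : Sym2 V) {s : List V}
    (h : IsLSeq (G.deleteEdges {e}) s) :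
    ∃ t : List V, IsLSeq G t ∧ s.length ≤ t.length + 2 := by
  classical
  induction e using Sym2.ind with
  | _ u v =>
  set t := s.filter (fun x => decide (x ≠ u ∧ x ≠ v)) with htdef
  have hsub : List.Sublist t s := List.filter_sublist
  obtain ⟨f, hf⟩ := List.sublist_iff_exists_fin_orderEmbedding_get_eq.mp hsub
  refine ⟨t, ⟨hsub.nodup h.1, ?_⟩, ?_⟩
  · intro i
    obtain ⟨w, hw1, hw2⟩ := h.2 (f i)
    refine ⟨w, ?_, ?_⟩
    · rw [hf i]
      rcases hw1 with h1 | h1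
      · exact Or.inl h1
      · exact Or.inr (SimpleGraph.deleteEdges_adj.mp h1).1
    · intro j hj hadj
      have hmem : t.get j ∈ t := t.get_mem _
      have hne : t.get j ≠ u ∧ t.get j ≠ v := by
        have := List.of_mem_filter hmem
        simpa using this
      have hlt : f j < f i := f.strictMono hj
      refine hw2 (f j) hlt ?_
      rw [SimpleGraph.deleteEdges_adj, ← hf j]
      refine ⟨hadj, ?_⟩
      intro hmemE
      rw [Set.mem_singleton_iff, Sym2.eq_iff] at hmemE
      rcases hmemE with ⟨h1, _⟩ | ⟨h1, _⟩
      · exact hne.1 h1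
      · exact hne.2 h1
  · have hb := length_le_filter_add h.1 (fun x => decide (x ≠ u ∧ x ≠ v))
      ({u, v} : Finset V) (by
        intro x _ hx
        simp only [decide_eq_true_eq, not_and_or, not_not] at hx
        simp only [Finset.mem_insert, Finset.mem_singleton]
        tauto)
    rw [← htdef] at hb
    have hcard : ({u, v} : Finset V).card ≤ 2 :=
      (Finset.card_insert_le _ _).trans (by simp)
    exact hb.trans (Nat.add_le_add_left hcard _)

/-- Deleting one edge can decrease the L-Grundy number by at most 1:
from an L-sequence of `G` we can obtain one of `G - e` losing at most 1 vertex. -/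
lemma lseq_deleteEdge_of_lseq (G : SimpleGraph V) (e : Sym2 V) {s : List V}
    (h : IsLSeq G s) :
    ∃ t : List V, IsLSeq (G.deleteEdges {e}) t ∧ s.length ≤ t.length + 1 := by
  classical
  obtain ⟨hnd, hseq⟩ := h
  choose w hw1 hw2 using hseq
  set B : Finset (Fin s.length) :=
    Finset.univ.filter (fun p => s(s.get p, w p) = e) with hBdef
  have hBmem : ∀ p, p ∈ B ↔ s(s.get p, w p) = e := by
    intro p; simp [hBdef]
  by_cases hB : B.Nonempty
  · -- delete the vertex at the maximal bad index
    set j0 : Fin s.length := B.max' hB with hj0def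
    have hj0B : s(s.get j0, w j0) = e := (hBmem j0).mp (B.max'_mem hB)
    set t := s.filter (fun x => decide (x ≠ s.get j0)) with htdef
    have hsub : List.Sublist t s := List.filter_sublist
    obtain ⟨f, hf⟩ := List.sublist_iff_exists_fin_orderEmbedding_get_eq.mp hsub
    have hne_j0 : ∀ i : Fin t.length, s.get (f i) ≠ s.get j0 := by
      intro i
      have hmem : t.get i ∈ t := t.get_mem _
      have := List.of_mem_filter hmem
      rw [← hf i]
      simpa using this
    have hfne : ∀ i : Fin t.length, f i ≠ j0 := by
      intro i hcon
      exact hne_j0 i (by rw [hcon])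
    refine ⟨t, ⟨hsub.nodup hnd, ?_⟩, ?_⟩
    · intro i
      by_cases hp : f i ∈ B
      · -- bad index: use the vertex itself as witness
        have hplt : f i < j0 := lt_of_le_of_ne (B.le_max' _ hp) (hfne i)
        have hpe : s(s.get (f i), w (f i)) = e := (hBmem _).mp hp
        have hkey : s.get (f i) = w j0 := by
          have heq : s(s.get (f i), w (f i)) = s(s.get j0, w j0) := by
            rw [hpe, hj0B]
          rw [Sym2.eq_iff] at heq
          rcases heq with ⟨h1, _⟩ | ⟨h1, _⟩
          · exact absurd h1 (hne_j0 i)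
          · exact h1
        refine ⟨t.get i, Or.inl rfl, ?_⟩
        intro j hj hadj
        have hadjG : G.Adj (t.get j) (t.get i) :=
          (SimpleGraph.deleteEdges_adj.mp hadj).1
        have hlt2 : f j < j0 := lt_trans (f.strictMono hj) hplt
        refine hw2 j0 (f j) hlt2 ?_
        rw [← hkey, ← hf j, ← hf i]
        exact hadjG
      · -- good index: keep the original witness
        refine ⟨w (f i), ?_, ?_⟩
        · rcases hw1 (f i) with h1 | h1
          · exact Or.inl (by rw [h1, hf i])
          · refine Or.inr ?_
            rw [hf i, SimpleGraph.deleteEdges_adj]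
            refine ⟨h1, ?_⟩
            rw [Set.mem_singleton_iff]
            intro hcon
            exact hp ((hBmem _).mpr hcon)
        · intro j hj hadj
          have hadjG : G.Adj (t.get j) (w (f i)) :=
            (SimpleGraph.deleteEdges_adj.mp hadj).1
          refine hw2 (f i) (f j) (f.strictMono hj) ?_
          rw [← hf j]
          exact hadjG
    · have hb := length_le_filter_add hnd (fun x => decide (x ≠ s.get j0))
        ({s.get j0} : Finset V) (by
          intro x _ hx
          simp only [decide_eq_true_eq, not_not] at hx
          simp [hx])
      rw [← htdef] at hb
      simpa using hb
  · -- no bad index: the sequence itself works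
    refine ⟨s, ⟨hnd, ?_⟩, by omega⟩
    intro i
    refine ⟨w i, ?_, ?_⟩
    · rcases hw1 i with h1 | h1
      · exact Or.inl h1
      · refine Or.inr (SimpleGraph.deleteEdges_adj.mpr ⟨h1, ?_⟩)
        rw [Set.mem_singleton_iff]
        intro hcon
        exact hB ⟨i, (hBmem i).mpr hcon⟩
    · intro j hj hadj
      exact hw2 i j hj (SimpleGraph.deleteEdges_adj.mp hadj).1

lemma lgrundy_deleteEdge_le [Fintype V] (G : SimpleGraph V) (e : Sym2 V) :
    LGrundy (G.deleteEdges {e}) ≤ LGrundy G + 2 := by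
  obtain ⟨m, hm, hlen⟩ := exists_lgrundy_seq (G.deleteEdges {e})
  obtain ⟨t, ht, hle⟩ := lseq_of_deleteEdge G e hm
  have := le_lgrundy ht
  omega

lemma le_lgrundy_deleteEdge [Fintype V] (G : SimpleGraph V) (e : Sym2 V) :
    LGrundy G ≤ LGrundy (G.deleteEdges {e}) + 1 := by
  obtain ⟨m, hm, hlen⟩ := exists_lgrundy_seq G
  obtain ⟨t, ht, hle⟩ := lseq_deleteEdge_of_lseq G e hm
  have := le_lgrundy ht
  omega

lemma lgrundy_deleteEdges_main [Fintype V] (G : SimpleGraph V) (s : Finset (Sym2 V)) :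
    LGrundy G ≤ LGrundy (G.deleteEdges ↑s) + s.card ∧
      LGrundy (G.deleteEdges ↑s) ≤ LGrundy G + 2 * s.card := by
  classical
  induction s using Finset.induction with
  | empty => simp
  | @insert a s ha ih =>
    have hrw : G.deleteEdges ↑(insert a s) = (G.deleteEdges ↑s).deleteEdges {a} := by
      rw [SimpleGraph.deleteEdges_deleteEdges]
      congr 1
      simp [Set.union_comm]
    have h1 := le_lgrundy_deleteEdge (G.deleteEdges ↑s) a
    have h2 := lgrundy_deleteEdge_le (G.deleteEdges ↑s) a
    rw [hrw, Finset.card_insert_of_notMem ha]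
    constructor <;> omega

end Aux

/-- If `G'` is obtained from `G` by deleting a set of `k` edges of `G`, then
`γ_gr^L(G) − k ≤ γ_gr^L(G') ≤ γ_gr^L(G) + 2k`. -/
theorem lgrundy_deleteEdges {V : Type*} [Fintype V]
    (G : SimpleGraph V) (s : Finset (Sym2 V)) (hs : ↑s ⊆ G.edgeSet) (k : ℕ)
    (hcard : s.card = k) :
    LGrundy G - k ≤ LGrundy (G.deleteEdges ↑s) ∧
      LGrundy (G.deleteEdges ↑s) ≤ LGrundy G + 2 * k := by
  subst hcard
  obtain ⟨h1, h2⟩ := lgrundy_deleteEdges_main G s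
  constructor <;> omega
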